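/- Let Ω ⊆ ℝ^{n+1} contain (0,…,0,1), suppose 0 ∉ Ω, and suppose the closure 𝓘(Ω) is full-dimensional. Then for any extreme ray r of cl cone(Ω), either some positive scalar multiple of r belongs to Ω, or there exists a sequence of pairwise distinct points r^i ∈ Ω that conically converges to r. -/

import Mathlib

noncomputable section

/-- The conical hull of a set: all finite nonnegative combinations of its elements. -/
def coneHull {E : Type*} [AddCommMonoid E] [Module ℝ E] (Ω : Set E) : Set E :=
  {y | ∃ (k : ℕ) (c : Fin k → ℝ) (v : Fin k → E),
    (∀ i, 0 ≤ c i) ∧ (∀ i, v i ∈ Ω) ∧ y = ∑ i, c i • v i}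

/-- The cutting-plane closure 𝓘(Ω) of a family Ω ⊆ ℝ^n × ℝ of inequalities. -/
def cutClosure {n : ℕ} (Ω : Set ((Fin n → ℝ) × ℝ)) : Set (Fin n → ℝ) :=
  {x | ∀ p ∈ Ω, ∑ i, p.1 i * x i ≤ p.2}

/-- `r` is an extreme ray of the convex cone `K`. -/
def IsExtremeRay {E : Type*} [AddCommMonoid E] [Module ℝ E] (K : Set E) (r : E) : Prop :=
  r ≠ 0 ∧ r ∈ K ∧ ∀ u v : E, u ∈ K → v ∈ K → r = u + v →
    (∃ c : ℝ, 0 ≤ c ∧ u = c • r) ∧ (∃ c : ℝ, 0 ≤ c ∧ v = c • r)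

open Set Filter

section Aux

variable {E : Type*} [AddCommGroup E] [Module ℝ E] {Ω : Set E}

lemma mem_coneHull_of_mem {p : E} (hp : p ∈ Ω) : p ∈ coneHull Ω :=
  ⟨1, fun _ => 1, fun _ => p, fun _ => zero_le_one, fun _ => hp, by simp⟩

lemma coneHull_smul_mem {c : ℝ} (hc : 0 ≤ c) {p : E} (hp : p ∈ coneHull Ω) :
    c • p ∈ coneHull Ω := by
  obtain ⟨k, co, v, hco, hv, rfl⟩ := hp
  exact ⟨k, fun i => c * co i, v, fun i => mul_nonneg hc (hco i), hv, by
    rw [Finset.smul_sum]; simp [mul_smul]⟩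

lemma coneHull_add_mem {p q : E} (hp : p ∈ coneHull Ω) (hq : q ∈ coneHull Ω) :
    p + q ∈ coneHull Ω := by
  obtain ⟨k, c, v, hc, hv, rfl⟩ := hp
  obtain ⟨l, d, w, hd, hw, rfl⟩ := hq
  refine ⟨k + l, Fin.append c d, Fin.append v w, ?_, ?_, ?_⟩
  · intro i
    refine Fin.addCases (fun j => ?_) (fun j => ?_) i
    · simpa using hc j
    · simpa using hd j
  · intro i
    refine Fin.addCases (fun j => ?_) (fun j => ?_) i
    · simpa using hv j
    · simpa using hw j
  · rw [Fin.sum_univ_add]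
    simp

lemma coneHull_convex : Convex ℝ (coneHull Ω) := by
  intro x hx y hy a b ha hb _
  exact coneHull_add_mem (coneHull_smul_mem ha hx) (coneHull_smul_mem hb hy)

end Aux

section FinDim

variable {E : Type*} [NormedAddCommGroup E] [NormedSpace ℝ E] [FiniteDimensional ℝ E]

lemma carath_fixed {S : Set E} {x : E} (hx : x ∈ convexHull ℝ S) :
    ∃ (w : Fin (Module.finrank ℝ E + 1) → ℝ) (z : Fin (Module.finrank ℝ E + 1) → E),
      (∀ i, 0 ≤ w i) ∧ ∑ i, w i = 1 ∧ (∀ i, z i ∈ S) ∧ ∑ i, w i • z i = x := by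
  have hSne : S.Nonempty := convexHull_nonempty_iff.mp ⟨x, hx⟩
  obtain ⟨s₀, hs₀⟩ := hSne
  obtain ⟨ι, hfin, z', w', hrange, hai, hwpos, hwsum, hzsum⟩ :=
    eq_pos_convex_span_of_mem_convexHull hx
  set d := Module.finrank ℝ E + 1 with hd
  have hcard : Fintype.card ι ≤ d := by
    have h1 := hai.card_le_finrank_succ
    have h2 : Module.finrank ℝ ↥(vectorSpan ℝ (range z')) ≤ Module.finrank ℝ E :=
      Submodule.finrank_le _
    omega
  set k := Fintype.card ι with hk
  let eqv : ι ≃ Fin k := Fintype.equivFin ι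
  classical
  let W : ℕ → ℝ := fun m => if h : m < k then w' (eqv.symm ⟨m, h⟩) else 0
  let Z : ℕ → E := fun m => if h : m < k then z' (eqv.symm ⟨m, h⟩) else s₀
  refine ⟨fun i => W i, fun i => Z i, ?_, ?_, ?_, ?_⟩
  · intro i
    by_cases h : (i : ℕ) < k <;> simp [W, h]
    exact (hwpos _).le
  · rw [Fin.sum_univ_eq_sum_range W d]
    rw [← Finset.sum_subset (Finset.range_subset_range.mpr hcard) (by
      intro m _ hm
      simp only [Finset.mem_range] at hm
      simp [W, hm])]
    rw [← Fin.sum_univ_eq_sum_range W k]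
    rw [← hwsum]
    rw [← Equiv.sum_comp eqv.symm w']
    apply Finset.sum_congr rfl
    intro i _
    simp [W, i.isLt]
  · intro i
    by_cases h : (i : ℕ) < k <;> simp [Z, h]
    · exact hrange ⟨_, rfl⟩
    · exact hs₀
  · rw [Fin.sum_univ_eq_sum_range (fun m => W m • Z m) d]
    rw [← Finset.sum_subset (Finset.range_subset_range.mpr hcard) (by
      intro m _ hm
      simp only [Finset.mem_range] at hm
      simp [W, hm])]
    rw [← Fin.sum_univ_eq_sum_range (fun m => W m • Z m) k]
    rw [← hzsum, ← Equiv.sum_comp eqv.symm (fun i => w' i • z' i)]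
    apply Finset.sum_congr rfl
    intro i _
    simp [W, Z, i.isLt]

/-- Milman-type theorem in finite dimension for bounded sets: extreme points of the
closed convex hull of a bounded set lie in the closure of the set. -/
lemma milman_findim {S : Set E} (hS : Bornology.IsBounded S) :
    Set.extremePoints ℝ (closure (convexHull ℝ S)) ⊆ closure S := by
  set d := Module.finrank ℝ E + 1 with hd
  set T := closure S with hT
  have hTcpt : IsCompact T := Metric.isCompact_of_isClosed_isBounded isClosed_closure hS.closure
  have hsub : closure (convexHull ℝ S) ⊆ convexHull ℝ T := by
    intro y hy
    obtain ⟨x, hxmem, hxlim⟩ := mem_closure_iff_seq_limit.mp hy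
    choose w z hw0 hwsum hzS hxsum using fun kk => carath_fixed (hxmem kk)
    set C : Set ((Fin d → ℝ) × (Fin d → E)) :=
      (Set.univ.pi fun _ => Set.Icc (0:ℝ) 1) ×ˢ (Set.univ.pi fun _ => T) with hC
    have hCcpt : IsCompact C :=
      (isCompact_univ_pi fun _ => isCompact_Icc).prod (isCompact_univ_pi fun _ => hTcpt)
    have hmemC : ∀ kk, (w kk, z kk) ∈ C := by
      intro kk
      constructor
      · intro i _
        refine ⟨hw0 kk i, ?_⟩
        calc w kk i ≤ ∑ j, w kk j :=
              Finset.single_le_sum (fun j _ => hw0 kk j) (Finset.mem_univ i)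
          _ = 1 := hwsum kk
      · intro i _
        exact subset_closure (hzS kk i)
    obtain ⟨⟨W, Z⟩, hWZ, g, hg, hconv⟩ := hCcpt.tendsto_subseq hmemC
    have hW : Tendsto (fun kk => w (g kk)) atTop (nhds W) :=
      (continuous_fst.tendsto _).comp hconv
    have hZ : Tendsto (fun kk => z (g kk)) atTop (nhds Z) :=
      (continuous_snd.tendsto _).comp hconv
    have hWi : ∀ i, Tendsto (fun kk => w (g kk) i) atTop (nhds (W i)) :=
      fun i => ((continuous_apply i).tendsto _).comp hW
    have hZi : ∀ i, Tendsto (fun kk => z (g kk) i) atTop (nhds (Z i)) :=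
      fun i => ((continuous_apply i).tendsto _).comp hZ
    have hWsum : ∑ i, W i = 1 := by
      have h1 : Tendsto (fun kk => ∑ i, w (g kk) i) atTop (nhds (∑ i, W i)) :=
        tendsto_finset_sum _ fun i _ => hWi i
      have h2 : Tendsto (fun kk => ∑ i, w (g kk) i) atTop (nhds 1) := by
        simpa [hwsum] using tendsto_const_nhds (α := ℝ) (f := (atTop : Filter ℕ))
      exact tendsto_nhds_unique h1 h2
    have hysum : ∑ i, W i • Z i = y := by
      have h1 : Tendsto (fun kk => ∑ i, w (g kk) i • z (g kk) i) atTop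
          (nhds (∑ i, W i • Z i)) :=
        tendsto_finset_sum _ fun i _ => (hWi i).smul (hZi i)
      have h2 : Tendsto (fun kk => ∑ i, w (g kk) i • z (g kk) i) atTop (nhds y) := by
        simpa [hxsum, Function.comp_def] using hxlim.comp hg.tendsto_atTop
      exact tendsto_nhds_unique h1 h2
    rw [← hysum]
    exact Convex.sum_mem (convex_convexHull ℝ T) (fun i _ => (hWZ.1 i (mem_univ i)).1)
      hWsum (fun i _ => subset_convexHull ℝ T (hWZ.2 i (mem_univ i)))
  have heq : convexHull ℝ T = closure (convexHull ℝ S) := by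
    apply Subset.antisymm
    · exact convexHull_min (hT ▸ closure_mono (subset_convexHull ℝ S))
        (convex_convexHull ℝ S).closure
    · exact hsub
  intro e he
  rw [← heq] at he
  exact extremePoints_convexHull_subset he

end FinDim

set_option maxHeartbeats 1000000 in
/-- Lemma: every extreme ray of cl cone(Ω) is (up to positive scaling) in Ω, or is the
conical limit of a sequence of pairwise distinct points of Ω. -/
theorem extremeRay_in_or_conical_limit {n : ℕ} (Ω : Set ((Fin n → ℝ) × ℝ))
    (hΩ : ((0 : Fin n → ℝ), (1 : ℝ)) ∈ Ω)
    (h0 : (0 : (Fin n → ℝ) × ℝ) ∉ Ω)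
    (hfull : (interior (cutClosure Ω)).Nonempty)
    (r : (Fin n → ℝ) × ℝ) (hr : IsExtremeRay (closure (coneHull Ω)) r) :
    (∃ c : ℝ, 0 < c ∧ c • r ∈ Ω) ∨
      ∃ rs : ℕ → ((Fin n → ℝ) × ℝ), Function.Injective rs ∧ (∀ i, rs i ∈ Ω) ∧
        ∃ lam : ℕ → ℝ, (∀ i, 0 < lam i) ∧
          Filter.Tendsto (fun i => lam i • rs i) Filter.atTop (nhds r) := by
  classical
  obtain ⟨x₀, hx₀⟩ := hfull
  obtain ⟨ε, hε, hball⟩ := Metric.mem_nhds_iff.mp (mem_interior_iff_mem_nhds.mp hx₀)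
  -- the positive linear functional φ
  set φ : ((Fin n → ℝ) × ℝ) →ₗ[ℝ] ℝ :=
    { toFun := fun p => p.2 - ∑ i, p.1 i * x₀ i
      map_add' := by
        intro a b
        simp [add_mul, Finset.sum_add_distrib]
        ring
      map_smul' := by
        intro c p
        show c * p.2 - ∑ i, (c * p.1 i) * x₀ i = c * (p.2 - ∑ i, p.1 i * x₀ i)
        rw [mul_sub, Finset.mul_sum]
        congr 1
        exact Finset.sum_congr rfl fun i _ => by ring } with hφdef
  have hφcont : Continuous φ := φ.continuous_of_finiteDimensional
  set Cc : ℝ := ∑ i, |x₀ i| with hCc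
  have hCc0 : 0 ≤ Cc := Finset.sum_nonneg fun i _ => abs_nonneg _
  set K₀ : ℝ := 2 / ε + 1 + (2 / ε) * Cc with hK₀
  have hK₀pos : 0 < K₀ := by positivity
  -- the key estimate on Ω
  have hbound : ∀ p ∈ Ω, ‖p‖ ≤ K₀ * φ p := by
    intro p hp
    have hsumle : ∀ x ∈ Metric.ball x₀ ε, ∑ i, p.1 i * x i ≤ p.2 :=
      fun x hx => hball hx p hp
    set u : Fin n → ℝ := fun i => if 0 ≤ p.1 i then 1 else -1 with hu
    have hunorm : ‖u‖ ≤ 1 := by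
      refine pi_norm_le_iff_of_nonneg zero_le_one |>.mpr fun i => ?_
      by_cases h : 0 ≤ p.1 i <;> simp [u, h]
    have hxball : x₀ + (ε / 2) • u ∈ Metric.ball x₀ ε := by
      rw [Metric.mem_ball, dist_eq_norm]
      have h1 : ‖x₀ + (ε / 2) • u - x₀‖ = ‖(ε / 2) • u‖ := by congr 1; abel
      rw [h1, norm_smul, Real.norm_eq_abs, abs_of_nonneg (by linarith : (0:ℝ) ≤ ε / 2)]
      nlinarith [norm_nonneg u]
    have hkey : ∑ i, p.1 i * x₀ i + (ε / 2) * ∑ i, |p.1 i| ≤ p.2 := by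
      have := hsumle _ hxball
      have heq : ∑ i, p.1 i * (x₀ + (ε / 2) • u) i
          = ∑ i, p.1 i * x₀ i + (ε / 2) * ∑ i, |p.1 i| := by
        rw [Finset.mul_sum, ← Finset.sum_add_distrib]
        refine Finset.sum_congr rfl fun i _ => ?_
        have hui : p.1 i * u i = |p.1 i| := by
          by_cases h : 0 ≤ p.1 i
          · simp [u, h, abs_of_nonneg h]
          · push_neg at h
            simp [u, not_le.mpr h, abs_of_neg h]
        simp only [Pi.add_apply, Pi.smul_apply, smul_eq_mul]
        rw [mul_add]
        congr 1
        rw [← hui]; ring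
      linarith [heq ▸ this]
    have hφp : (ε / 2) * ∑ i, |p.1 i| ≤ φ p := by
      have : φ p = p.2 - ∑ i, p.1 i * x₀ i := rfl
      linarith [this]
    have habs_sum_nonneg : 0 ≤ ∑ i, |p.1 i| := Finset.sum_nonneg fun i _ => abs_nonneg _
    have hφnonneg : 0 ≤ φ p := le_trans (by positivity) hφp
    have hn1 : ‖p.1‖ ≤ ∑ i, |p.1 i| := by
      refine pi_norm_le_iff_of_nonneg habs_sum_nonneg |>.mpr fun i => ?_
      calc ‖p.1 i‖ = |p.1 i| := Real.norm_eq_abs _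
        _ ≤ ∑ j, |p.1 j| := Finset.single_le_sum (f := fun j => |p.1 j|)
              (fun j _ => abs_nonneg _) (Finset.mem_univ i)
    have hn2 : ‖p.1‖ ≤ (2 / ε) * φ p := by
      have h2 : ∑ i, |p.1 i| ≤ (2 / ε) * φ p := by
        rw [div_mul_eq_mul_div, le_div_iff₀ hε]
        linarith
      linarith
    have hdot : |∑ i, p.1 i * x₀ i| ≤ ‖p.1‖ * Cc := by
      calc |∑ i, p.1 i * x₀ i| ≤ ∑ i, |p.1 i * x₀ i| := Finset.abs_sum_le_sum_abs _ _
        _ ≤ ∑ i, ‖p.1‖ * |x₀ i| := by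
            refine Finset.sum_le_sum fun i _ => ?_
            rw [abs_mul]
            exact mul_le_mul_of_nonneg_right
              ((Real.norm_eq_abs _) ▸ norm_le_pi_norm p.1 i) (abs_nonneg _)
        _ = ‖p.1‖ * Cc := by rw [← Finset.mul_sum]
    have hβ : |p.2| ≤ (1 + (2 / ε) * Cc) * φ p := by
      have hp2 : p.2 = φ p + ∑ i, p.1 i * x₀ i := by
        have : φ p = p.2 - ∑ i, p.1 i * x₀ i := rfl
        linarith
      have h1 : |p.2| ≤ φ p + |∑ i, p.1 i * x₀ i| := by
        rw [hp2]
        calc |φ p + ∑ i, p.1 i * x₀ i| ≤ |φ p| + |∑ i, p.1 i * x₀ i| := abs_add_le _ _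
          _ = φ p + |∑ i, p.1 i * x₀ i| := by rw [abs_of_nonneg hφnonneg]
      have h3 : ‖p.1‖ * Cc ≤ ((2 / ε) * φ p) * Cc := mul_le_mul_of_nonneg_right hn2 hCc0
      have h4 : (1 + (2 / ε) * Cc) * φ p = φ p + ((2 / ε) * φ p) * Cc := by ring
      linarith
    rw [Prod.norm_def]
    rw [sup_le_iff]
    have h2ε : 0 ≤ 2 / ε := by positivity
    have hprod : 0 ≤ (2 / ε) * Cc := mul_nonneg h2ε hCc0
    have hcoef1 : (2 / ε) ≤ K₀ := by
      rw [hK₀]; linarith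
    have hcoef2 : (1 + (2 / ε) * Cc) ≤ K₀ := by
      rw [hK₀]; linarith
    constructor
    · calc ‖p.1‖ ≤ (2 / ε) * φ p := hn2
        _ ≤ K₀ * φ p := mul_le_mul_of_nonneg_right hcoef1 hφnonneg
    · calc ‖p.2‖ = |p.2| := Real.norm_eq_abs _
        _ ≤ (1 + (2 / ε) * Cc) * φ p := hβ
        _ ≤ K₀ * φ p := mul_le_mul_of_nonneg_right hcoef2 hφnonneg
  -- estimate extends to the closed conical hull
  set K : Set ((Fin n → ℝ) × ℝ) := closure (coneHull Ω) with hKdef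
  have hconebound : ∀ y ∈ coneHull Ω, ‖y‖ ≤ K₀ * φ y := by
    rintro y ⟨k, c, v, hc, hv, rfl⟩
    calc ‖∑ i, c i • v i‖ ≤ ∑ i, ‖c i • v i‖ := norm_sum_le _ _
      _ = ∑ i, c i * ‖v i‖ := by
          refine Finset.sum_congr rfl fun i _ => ?_
          rw [norm_smul, Real.norm_eq_abs, abs_of_nonneg (hc i)]
      _ ≤ ∑ i, c i * (K₀ * φ (v i)) := by
          refine Finset.sum_le_sum fun i _ => ?_
          exact mul_le_mul_of_nonneg_left (hbound _ (hv i)) (hc i)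
      _ = K₀ * φ (∑ i, c i • v i) := by
          rw [map_sum]
          rw [Finset.mul_sum]
          refine Finset.sum_congr rfl fun i _ => ?_
          rw [map_smul]
          simp; ring
  have hKbound : ∀ y ∈ K, ‖y‖ ≤ K₀ * φ y := by
    have hclosed : IsClosed {y : (Fin n → ℝ) × ℝ | ‖y‖ ≤ K₀ * φ y} :=
      isClosed_le continuous_norm (continuous_const.mul hφcont)
    intro y hy
    exact closure_minimal hconebound hclosed hy
  have hφΩpos : ∀ p ∈ Ω, 0 < φ p := by
    intro p hp
    have hpne : p ≠ 0 := fun h => h0 (h ▸ hp)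
    have h1 : 0 < ‖p‖ := norm_pos_iff.mpr hpne
    by_contra hneg
    push_neg at hneg
    have h3 : K₀ * φ p ≤ 0 := mul_nonpos_of_nonneg_of_nonpos hK₀pos.le hneg
    linarith [hbound p hp]
  -- K is a closed convex cone
  have hKsmul : ∀ c : ℝ, 0 ≤ c → ∀ y ∈ K, c • y ∈ K := by
    intro c hcnn y hy
    have h1 : c • y ∈ (c • ·) '' (closure (coneHull Ω)) := ⟨y, hy, rfl⟩
    have h2 : (c • ·) '' (closure (coneHull Ω)) ⊆ closure ((c • ·) '' (coneHull Ω)) :=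
      image_closure_subset_closure_image (continuous_const_smul c)
    refine closure_mono ?_ (h2 h1)
    rintro z ⟨z', hz', rfl⟩
    exact coneHull_smul_mem hcnn hz'
  have hKconv : Convex ℝ K := coneHull_convex.closure
  obtain ⟨hrne, hrK, hrext⟩ := hr
  have hφrpos : 0 < φ r := by
    have h1 : 0 < ‖r‖ := norm_pos_iff.mpr hrne
    by_contra hneg
    push_neg at hneg
    have h3 : K₀ * φ r ≤ 0 := mul_nonpos_of_nonneg_of_nonpos hK₀pos.le hneg
    linarith [hKbound r hrK]
  -- the normalized generator set
  set Sh : Set ((Fin n → ℝ) × ℝ) := (fun p => (φ p)⁻¹ • p) '' Ω with hSh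
  have hShφ : ∀ q ∈ Sh, φ q = 1 := by
    rintro q ⟨p, hp, rfl⟩
    rw [map_smul]
    simp [inv_mul_cancel₀ (ne_of_gt (hφΩpos p hp))]
  have hShK : Sh ⊆ K := by
    rintro q ⟨p, hp, rfl⟩
    exact subset_closure (coneHull_smul_mem (inv_nonneg.mpr (hφΩpos p hp).le)
      (mem_coneHull_of_mem hp))
  have hShbdd : Bornology.IsBounded Sh := by
    refine isBounded_iff_forall_norm_le.mpr ⟨K₀, fun q hq => ?_⟩
    have := hKbound q (hShK hq)
    rw [hShφ q hq] at this
    simpa using this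
  -- the base B of the cone
  set B : Set ((Fin n → ℝ) × ℝ) := K ∩ {y | φ y = 1} with hB
  have hBclosed : IsClosed B := isClosed_closure.inter (isClosed_eq hφcont continuous_const)
  have hBconv : Convex ℝ B := hKconv.inter (convex_hyperplane φ.isLinear 1)
  -- the distinguished element (0,1)
  have hq₀Sh : ((0 : Fin n → ℝ), (1 : ℝ)) ∈ Sh := by
    refine ⟨((0 : Fin n → ℝ), (1 : ℝ)), hΩ, ?_⟩
    show (φ ((0 : Fin n → ℝ), (1 : ℝ)))⁻¹ • ((0 : Fin n → ℝ), (1 : ℝ))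
      = ((0 : Fin n → ℝ), (1 : ℝ))
    have h1 : φ ((0 : Fin n → ℝ), (1 : ℝ)) = 1 := by simp [hφdef]
    rw [h1]
    simp
  have hBeq : closure (convexHull ℝ Sh) = B := by
    apply Subset.antisymm
    · refine closure_minimal (convexHull_min ?_ hBconv) hBclosed
      exact fun q hq => ⟨hShK hq, hShφ q hq⟩
    · rintro y ⟨hyK, hyφ⟩
      obtain ⟨x, hxmem, hxlim⟩ := mem_closure_iff_seq_limit.mp hyK
      have hφx : Tendsto (fun k => φ (x k)) atTop (nhds 1) := by
        have := (hφcont.tendsto y).comp hxlim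
        rwa [hyφ] at this
      set Q : ℕ → (Fin n → ℝ) × ℝ := fun k =>
        if h : 0 < φ (x k) then (φ (x k))⁻¹ • x k else ((0 : Fin n → ℝ), (1 : ℝ)) with hQ
      have hQmem : ∀ k, Q k ∈ convexHull ℝ Sh := by
        intro k
        by_cases h : 0 < φ (x k)
        · simp only [hQ, dif_pos h]
          obtain ⟨m, c, v, hc, hv, hxe⟩ := hxmem k
          have hφxk : φ (x k) = ∑ i, c i * φ (v i) := by
            rw [hxe, map_sum]
            refine Finset.sum_congr rfl fun i _ => ?_
            rw [map_smul]; simp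
          have hφvne : ∀ i, φ (v i) ≠ 0 := fun i => ne_of_gt (hφΩpos _ (hv i))
          have key : (φ (x k))⁻¹ • x k
              = ∑ i, ((φ (x k))⁻¹ * (c i * φ (v i))) • ((φ (v i))⁻¹ • v i) := by
            set s := φ (x k) with hs
            rw [hxe, Finset.smul_sum]
            refine Finset.sum_congr rfl fun i _ => ?_
            rw [smul_smul, smul_smul]
            congr 1
            rw [mul_assoc]
            congr 1
            rw [mul_assoc, mul_inv_cancel₀ (hφvne i), mul_one]
          rw [key]
          refine Convex.sum_mem (convex_convexHull ℝ Sh) (fun i _ => ?_) ?_ (fun i _ => ?_)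
          · exact mul_nonneg (inv_nonneg.mpr h.le)
              (mul_nonneg (hc i) (hφΩpos _ (hv i)).le)
          · rw [← Finset.mul_sum, ← hφxk]
            exact inv_mul_cancel₀ (ne_of_gt h)
          · exact subset_convexHull ℝ Sh ⟨v i, hv i, rfl⟩
        · simp only [hQ, dif_neg h]
          exact subset_convexHull ℝ Sh hq₀Sh
      have hQlim : Tendsto Q atTop (nhds y) := by
        have hev : ∀ᶠ k in atTop, Q k = (φ (x k))⁻¹ • x k := by
          filter_upwards [hφx.eventually (eventually_gt_nhds (by norm_num : (0:ℝ) < 1))]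
            with k hk
          rw [hQ]
          simp only [dif_pos hk]
        refine Tendsto.congr' (hev.mono fun k hk => hk.symm) ?_
        have : Tendsto (fun k => (φ (x k))⁻¹ • x k) atTop (nhds ((1:ℝ)⁻¹ • y)) :=
          Tendsto.smul (hφx.inv₀ one_ne_zero) hxlim
        simpa using this
      exact mem_closure_of_tendsto hQlim (Eventually.of_forall hQmem)
  -- e = normalized r is an extreme point of B
  set e : (Fin n → ℝ) × ℝ := (φ r)⁻¹ • r with he
  have hre : r = φ r • e := by
    rw [he, smul_smul, mul_inv_cancel₀ (ne_of_gt hφrpos), one_smul]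
  have heB : e ∈ B := by
    constructor
    · exact hKsmul _ (inv_nonneg.mpr hφrpos.le) r hrK
    · show φ e = 1
      rw [he, map_smul]
      simp [inv_mul_cancel₀ (ne_of_gt hφrpos)]
  have hext : e ∈ Set.extremePoints ℝ B := by
    refine mem_extremePoints.mpr ⟨heB, ?_⟩
    rintro x₁ hx₁ x₂ hx₂ ⟨a, b, ha, hb, hab, habe⟩
    have hu : (φ r * a) • x₁ ∈ K := hKsmul _ (by positivity) x₁ hx₁.1
    have hv : (φ r * b) • x₂ ∈ K := hKsmul _ (by positivity) x₂ hx₂.1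
    have hru : r = (φ r * a) • x₁ + (φ r * b) • x₂ := by
      conv_lhs => rw [hre]
      rw [← habe, smul_add, smul_smul, smul_smul]
    obtain ⟨⟨c₁, hc₁, he₁⟩, ⟨c₂, hc₂, he₂⟩⟩ := hrext _ _ hu hv hru
    have hx1e : x₁ = e := by
      have hφ1 : φ ((φ r * a) • x₁) = φ (c₁ • r) := by rw [he₁]
      rw [map_smul, map_smul] at hφ1
      have hφx₁ : φ x₁ = 1 := hx₁.2
      rw [hφx₁] at hφ1
      simp only [smul_eq_mul, mul_one] at hφ1
      have hc₁a : c₁ = a := by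
        refine mul_left_cancel₀ (ne_of_gt hφrpos) ?_
        linarith [mul_comm c₁ (φ r)]
      have : (φ r * a) • x₁ = (φ r * a) • e := by
        rw [he₁, hc₁a]
        conv_lhs => rw [hre]
        rw [smul_smul, mul_comm a (φ r)]
      exact smul_right_injective _ (by positivity : φ r * a ≠ 0) this
    have hx2e : x₂ = e := by
      have hφ2 : φ ((φ r * b) • x₂) = φ (c₂ • r) := by rw [he₂]
      rw [map_smul, map_smul] at hφ2
      have hφx₂ : φ x₂ = 1 := hx₂.2
      rw [hφx₂] at hφ2
      simp only [smul_eq_mul, mul_one] at hφ2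
      have hc₂b : c₂ = b := by
        refine mul_left_cancel₀ (ne_of_gt hφrpos) ?_
        linarith [mul_comm c₂ (φ r)]
      have : (φ r * b) • x₂ = (φ r * b) • e := by
        rw [he₂, hc₂b]
        conv_lhs => rw [hre]
        rw [smul_smul, mul_comm b (φ r)]
      exact smul_right_injective _ (by positivity : φ r * b ≠ 0) this
    exact ⟨hx1e, hx2e⟩
  -- Milman: e lies in the closure of Sh
  have hecl : e ∈ closure Sh := by
    apply milman_findim hShbdd
    rwa [hBeq]
  -- extract a sequence from Ω
  obtain ⟨q, hqmem, hqlim⟩ := mem_closure_iff_seq_limit.mp hecl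
  choose p hpΩ hpq using fun k => hqmem k
  have hpq' : ∀ k, (φ (p k))⁻¹ • p k = q k := hpq
  have hlam'pos : ∀ k, 0 < φ r * (φ (p k))⁻¹ := fun k =>
    mul_pos hφrpos (inv_pos.mpr (hφΩpos _ (hpΩ k)))
  have hlim' : Tendsto (fun k => (φ r * (φ (p k))⁻¹) • p k) atTop (nhds r) := by
    have heq : ∀ k, (φ r * (φ (p k))⁻¹) • p k = φ r • q k := by
      intro k
      rw [mul_smul, hpq' k]
    rw [funext heq]
    have h5 : Tendsto (fun k => φ r • q k) atTop (nhds (φ r • e)) :=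
      Tendsto.const_smul hqlim (φ r)
    rwa [← hre] at h5
  by_cases hcase : ∃ v, {k | p k = v}.Infinite
  · -- a value occurs infinitely often: r is a positive multiple of an element of Ω
    left
    obtain ⟨v, hvinf⟩ := hcase
    have hvΩ : v ∈ Ω := by
      obtain ⟨k, hk⟩ := hvinf.nonempty
      exact hk ▸ hpΩ k
    have hfreq : ∃ᶠ k in atTop, q k = (φ v)⁻¹ • v := by
      rw [Filter.frequently_atTop]
      intro N
      obtain ⟨k, hkmem, hkN⟩ := hvinf.exists_gt N
      exact ⟨k, hkN.le, by rw [← hpq k, hkmem]⟩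
    have hecl2 : e ∈ closure {(φ v)⁻¹ • v} :=
      mem_closure_of_frequently_of_tendsto hfreq hqlim
    rw [closure_singleton, mem_singleton_iff] at hecl2
    refine ⟨φ v * (φ r)⁻¹, mul_pos (hφΩpos v hvΩ) (inv_pos.mpr hφrpos), ?_⟩
    have : (φ v * (φ r)⁻¹) • r = φ v • e := by rw [he, smul_smul]
    rw [this, hecl2, smul_smul, mul_inv_cancel₀ (ne_of_gt (hφΩpos v hvΩ)), one_smul]
    exact hvΩ
  · -- all fibers finite: extract an injective subsequence
    right
    push_neg at hcase
    have key : ∀ N : ℕ, ∃ m, N < m ∧ p m ∉ p '' Set.Iic N := by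
      intro N
      have hbad : {m | p m ∈ p '' Set.Iic N}.Finite := by
        have hsub : {m | p m ∈ p '' Set.Iic N} ⊆ ⋃ i ∈ Set.Iic N, {m | p m = p i} := by
          rintro m ⟨i, hiN, hpi⟩
          exact Set.mem_biUnion hiN hpi.symm
        exact Set.Finite.subset ((Set.finite_Iic N).biUnion fun i _ => hcase (p i)) hsub
      obtain ⟨M, hM⟩ := (hbad.union (Set.finite_Iic N)).bddAbove
      refine ⟨M + 1, ?_, ?_⟩
      · by_contra h
        push_neg at h
        have : M + 1 ≤ M := hM (Set.mem_union_right _ h)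
        omega
      · intro hmem
        have : M + 1 ≤ M := hM (Set.mem_union_left _ hmem)
        omega
    set f : ℕ → ℕ := fun k => Nat.rec 0 (fun _ fk => (key fk).choose) k with hf
    have hfsucc : ∀ k, f (k + 1) = (key (f k)).choose := fun k => rfl
    have hfmono : StrictMono f := by
      apply strictMono_nat_of_lt_succ
      intro k
      rw [hfsucc]
      exact (key (f k)).choose_spec.1
    have hinj : Function.Injective (fun k => p (f k)) := by
      have hne : ∀ a b, a < b → p (f a) ≠ p (f b) := by
        intro a b hab
        obtain ⟨b', rfl⟩ : ∃ b', b = b' + 1 := ⟨b - 1, by omega⟩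
        have h1 : p (f (b' + 1)) ∉ p '' Set.Iic (f b') := by
          rw [hfsucc]
          exact (key (f b')).choose_spec.2
        have h2 : f a ≤ f b' := hfmono.monotone (by omega)
        exact fun h => h1 (h ▸ ⟨f a, h2, rfl⟩)
      intro a b hab
      by_contra h
      rcases lt_trichotomy a b with h' | h' | h'
      · exact hne a b h' hab
      · exact h h'
      · exact hne b a h' hab.symm
    refine ⟨fun k => p (f k), hinj, fun k => hpΩ (f k),
      fun k => φ r * (φ (p (f k)))⁻¹, fun k => hlam'pos (f k), ?_⟩
    exact hlim'.comp hfmono.tendsto_atTop
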